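/- Let μ be a Borel probability measure on ℝ, let ν be a Borel measure on ℝ, and let 0 < c < d < ∞ with ν([c,∞)) < ∞. Let φ : ℝ → ℝ be continuously differentiable with support contained in [c,d]. Then for every Δ > 0, |(1/Δ) ∫_ℝ φ dμ − ∫_ℝ φ dν| ≤ (sup_{x∈ℝ} |φ(x)| + ∫_ℝ |φ'(y)| dy) · sup_{y∈[c,d]} |(1/Δ) μ([y,∞)) − ν([y,∞))|. -/

import Mathlib

open MeasureTheory Real Set

lemma fubini_aux_st (m : Measure ℝ) [IsFiniteMeasure m] (h : ℝ → ℝ) (hcont : Continuous h)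
    (hcs : HasCompactSupport h) :
    ∫ x, (∫ y in Iic x, h y) ∂m = ∫ y, (m (Ici y)).toReal * h y := by
  have hInt : Integrable h volume := hcont.integrable_of_hasCompactSupport hcs
  set F : ℝ × ℝ → ℝ := {p : ℝ × ℝ | p.2 ≤ p.1}.indicator (fun p => h p.2) with hFdef
  have hS : MeasurableSet {p : ℝ × ℝ | p.2 ≤ p.1} := measurableSet_le measurable_snd measurable_fst
  have hF : Integrable F (m.prod volume) := by
    apply Integrable.indicator _ hS
    have : Integrable (fun z : ℝ × ℝ => (1:ℝ) * h z.2) (m.prod volume) :=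
      (integrable_const (1:ℝ)).mul_prod hInt
    simpa using this
  have step1 : ∀ x : ℝ, (∫ y in Iic x, h y) = ∫ y, F (x, y) := by
    intro x
    rw [← integral_indicator measurableSet_Iic]
    apply integral_congr_ae (Filter.Eventually.of_forall fun y => ?_)
    simp only [hFdef, Set.indicator, Set.mem_Iic, Set.mem_setOf_eq]
  have step2 : ∀ y : ℝ, (∫ x, F (x, y) ∂m) = (m (Ici y)).toReal * h y := by
    intro y
    have e : (fun x => F (x, y)) = (Ici y).indicator (fun _ => h y) := by
      ext x
      simp only [hFdef, Set.indicator, Set.mem_Ici, Set.mem_setOf_eq]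
    rw [e, integral_indicator_const _ measurableSet_Ici, smul_eq_mul]
    rfl
  have hF' : Integrable (Function.uncurry fun x y => F (x, y)) (m.prod volume) := hF
  simp_rw [step1]
  rw [integral_integral_swap hF']
  simp_rw [step2]

theorem smalltime_section2_inequality (μ ν : Measure ℝ) [IsProbabilityMeasure μ]
    (c d : ℝ) (hc : 0 < c) (hcd : c < d)
    (hν : ν (Ici c) < ⊤)
    (φ : ℝ → ℝ) (hφ : ContDiff ℝ 1 φ)
    (hsupp : Function.support φ ⊆ Icc c d) :
    ∀ Δ : ℝ, 0 < Δ →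
      |(1 / Δ) * ∫ x, φ x ∂μ - ∫ x, φ x ∂ν| ≤
        ((⨆ x : ℝ, |φ x|) + ∫ y : ℝ, |deriv φ y|) *
          ⨆ y : Icc c d, |(1 / Δ) * (μ (Ici (y : ℝ))).toReal - (ν (Ici (y : ℝ))).toReal| := by
  intro Δ hΔ
  set h : ℝ → ℝ := deriv φ with hh
  have hφc : Continuous φ := hφ.continuous
  have hhc : Continuous h := hφ.continuous_deriv le_rfl
  have hx0 : ∀ x ∉ Icc c d, φ x = 0 := fun x hx =>
    Function.notMem_support.mp (fun hs => hx (hsupp hs))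
  have hhsupp : ∀ y ∉ Icc c d, h y = 0 := by
    intro y hy
    have hev : φ =ᶠ[nhds y] (fun _ => (0:ℝ)) :=
      Filter.eventuallyEq_of_mem (isClosed_Icc.isOpen_compl.mem_nhds hy)
        (fun z hz => hx0 z hz)
    calc h y = deriv (fun _ => (0:ℝ)) y := hev.deriv_eq
    _ = 0 := deriv_const y 0
  have hCSh : HasCompactSupport h := HasCompactSupport.intro isCompact_Icc hhsupp
  have hInt_h : Integrable h volume := hhc.integrable_of_hasCompactSupport hCSh
  -- representation of φ
  have hrep : ∀ x : ℝ, φ x = ∫ y in Iic x, h y := by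
    intro x
    have hiOn : ∀ a : ℝ, IntegrableOn h (Iic a) volume := fun a => hInt_h.integrableOn
    have h0 : (∫ y in Iic (c/2), h y) = 0 := by
      apply setIntegral_eq_zero_of_forall_eq_zero
      intro y hy
      apply hhsupp
      intro hyc
      have : c ≤ y := hyc.1
      simp only [Set.mem_Iic] at hy
      linarith
    have hsub := intervalIntegral.integral_Iic_sub_Iic (hiOn (c/2)) (hiOn x)
    have ftc : (∫ y in (c/2)..x, h y) = φ x - φ (c/2) := by
      apply intervalIntegral.integral_deriv_eq_sub
      · exact fun z _ => (hφ.differentiable one_ne_zero).differentiableAt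
      · exact hhc.intervalIntegrable _ _
    have hphic : φ (c/2) = 0 := by
      apply hx0
      intro hyc
      have : c ≤ c/2 := hyc.1
      linarith
    rw [h0, sub_zero] at hsub
    rw [hsub, ftc, hphic, sub_zero]
  -- finite restricted measure
  haveI : IsFiniteMeasure (ν.restrict (Ici c)) :=
    ⟨by rwa [Measure.restrict_apply_univ]⟩
  have Eμ : (∫ x, φ x ∂μ) = ∫ y, (μ (Ici y)).toReal * h y := by
    rw [show (∫ x, φ x ∂μ) = ∫ x, (∫ y in Iic x, h y) ∂μ from integral_congr_ae
      (Filter.Eventually.of_forall hrep)]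
    exact fubini_aux_st μ h hhc hCSh
  have Eν : (∫ x, φ x ∂ν) = ∫ y, (ν (Ici y)).toReal * h y := by
    have e1 : (∫ x, φ x ∂ν) = ∫ x, φ x ∂(ν.restrict (Ici c)) := by
      rw [← integral_indicator measurableSet_Ici]
      congr 1
      ext x
      by_cases hx : x ∈ Ici c
      · simp [hx]
      · simp only [Set.indicator, hx, if_false]
        exact (hx0 x (fun hxc => hx hxc.1))
    rw [e1, show (∫ x, φ x ∂(ν.restrict (Ici c))) = ∫ x, (∫ y in Iic x, h y) ∂(ν.restrict (Ici c))
      from integral_congr_ae (Filter.Eventually.of_forall hrep),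
      fubini_aux_st (ν.restrict (Ici c)) h hhc hCSh]
    apply integral_congr_ae
    apply Filter.Eventually.of_forall
    intro y
    by_cases hy : h y = 0
    · simp [hy]
    · have hyc : y ∈ Icc c d := by
        by_contra hyn
        exact hy (hhsupp y hyn)
      show ((ν.restrict (Ici c)) (Ici y)).toReal * h y = (ν (Ici y)).toReal * h y
      rw [Measure.restrict_apply measurableSet_Ici]
      rw [Set.inter_eq_self_of_subset_left (Set.Ici_subset_Ici.mpr hyc.1)]
  -- measurability of tail functions
  have hmμ : Measurable fun y : ℝ => (μ (Ici y)).toReal := by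
    apply ENNReal.measurable_toReal.comp
    exact Antitone.measurable (fun a b hab => measure_mono (Set.Ici_subset_Ici.mpr hab))
  have hmν : Measurable fun y : ℝ => (ν (Ici y)).toReal := by
    apply ENNReal.measurable_toReal.comp
    exact Antitone.measurable (fun a b hab => measure_mono (Set.Ici_subset_Ici.mpr hab))
  -- integrability
  have hg1 : Integrable (fun y => (μ (Ici y)).toReal * h y) volume := by
    apply Integrable.mono' hInt_h.abs ((hmμ.mul hhc.measurable).aestronglyMeasurable)
    apply Filter.Eventually.of_forall
    intro y
    rw [Real.norm_eq_abs, Pi.mul_apply, abs_mul]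
    have h1 : (μ (Ici y)).toReal ≤ 1 := by
      apply ENNReal.toReal_le_of_le_ofReal one_pos.le
      simpa using prob_le_one (μ := μ) (s := Ici y)
    calc |(μ (Ici y)).toReal| * |h y| = (μ (Ici y)).toReal * |h y| := by
          rw [abs_of_nonneg ENNReal.toReal_nonneg]
      _ ≤ 1 * |h y| := by apply mul_le_mul_of_nonneg_right h1 (abs_nonneg _)
      _ = |h y| := one_mul _
  have hg2 : Integrable (fun y => (ν (Ici y)).toReal * h y) volume := by
    apply Integrable.mono' (hInt_h.abs.const_mul (ν (Ici c)).toReal)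
      ((hmν.mul hhc.measurable).aestronglyMeasurable)
    apply Filter.Eventually.of_forall
    intro y
    rw [Real.norm_eq_abs, Pi.mul_apply, abs_mul, abs_of_nonneg ENNReal.toReal_nonneg]
    by_cases hy : h y = 0
    · simp [hy]
    · have hyc : y ∈ Icc c d := by
        by_contra hyn
        exact hy (hhsupp y hyn)
      apply mul_le_mul_of_nonneg_right _ (abs_nonneg _)
      exact ENNReal.toReal_mono hν.ne (measure_mono (Set.Ici_subset_Ici.mpr hyc.1))
  -- the sup S
  set S : ℝ := ⨆ y : Icc c d, |(1 / Δ) * (μ (Ici (y : ℝ))).toReal - (ν (Ici (y : ℝ))).toReal|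
    with hSdef
  have hbdd : BddAbove (Set.range fun y : Icc c d =>
      |(1 / Δ) * (μ (Ici (y : ℝ))).toReal - (ν (Ici (y : ℝ))).toReal|) := by
    refine ⟨(1/Δ) * 1 + (ν (Ici c)).toReal, ?_⟩
    rintro _ ⟨y, rfl⟩
    apply (abs_sub _ _).trans
    gcongr
    · rw [abs_of_nonneg (by positivity)]
      gcongr
      · apply ENNReal.toReal_le_of_le_ofReal one_pos.le
        simpa using prob_le_one (μ := μ) (s := Ici (y : ℝ))
    · rw [abs_of_nonneg ENNReal.toReal_nonneg]
      exact ENNReal.toReal_mono hν.ne (measure_mono (Set.Ici_subset_Ici.mpr y.2.1))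
  have hS0 : 0 ≤ S := Real.iSup_nonneg (fun y => abs_nonneg _)
  have hSle : ∀ y ∈ Icc c d, |(1 / Δ) * (μ (Ici y)).toReal - (ν (Ici y)).toReal| ≤ S := by
    intro y hy
    exact le_ciSup hbdd (⟨y, hy⟩ : Icc c d)
  -- combine
  set g : ℝ → ℝ := fun y => ((1 / Δ) * (μ (Ici y)).toReal - (ν (Ici y)).toReal) * h y with hgdef
  have hgInt : Integrable g volume := by
    have : g = fun y => (1/Δ) * ((μ (Ici y)).toReal * h y) - (ν (Ici y)).toReal * h y := by
      funext y; simp [hgdef]; ring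
    rw [this]
    exact (hg1.const_mul (1/Δ)).sub hg2
  have key : (1 / Δ) * (∫ x, φ x ∂μ) - (∫ x, φ x ∂ν) = ∫ y, g y := by
    rw [Eμ, Eν, ← integral_const_mul]
    rw [← integral_sub (hg1.const_mul (1/Δ)) hg2]
    congr 1
    funext y
    simp [hgdef]
    ring
  rw [key]
  have bound1 : |∫ y, g y| ≤ ∫ y, |g y| := by
    simpa [Real.norm_eq_abs] using norm_integral_le_integral_norm g (μ := volume)
  have bound2 : (∫ y, |g y|) ≤ ∫ y, |h y| * S := by
    apply integral_mono hgInt.abs (hInt_h.abs.mul_const S)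
    intro y
    simp only [hgdef, abs_mul]
    by_cases hy : h y = 0
    · simp [hy, hS0]
    · have hyc : y ∈ Icc c d := by
        by_contra hyn
        exact hy (hhsupp y hyn)
      rw [mul_comm (|h y|) S]
      exact mul_le_mul_of_nonneg_right (hSle y hyc) (abs_nonneg _)
  have bound3 : (∫ y, |h y| * S) = (∫ y, |h y|) * S := integral_mul_const S _
  have final : (∫ y, |h y|) * S ≤ ((⨆ x : ℝ, |φ x|) + ∫ y, |h y|) * S := by
    apply mul_le_mul_of_nonneg_right _ hS0
    exact le_add_of_nonneg_left (Real.iSup_nonneg (fun x => abs_nonneg _))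
  calc |∫ y, g y| ≤ ∫ y, |g y| := bound1
    _ ≤ ∫ y, |h y| * S := bound2
    _ = (∫ y, |h y|) * S := bound3
    _ ≤ _ := final
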